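/- Let b ∈ {0,1}^ℓ be an arrival sequence of length ℓ with exactly k zeros whose merging path contains exactly β bounces. Then (ℓ - 2k)/2 ≤ β and β ≤ (ℓ - k + 1)/2, i.e., ℓ ≤ 2k + 2β and 2β ≤ ℓ - k + 1. -/

import Mathlib

/-- Process an arrival sequence with right-lane count `R` and left-lane count `L`:
`false` (a red car) or a shorter-or-equal right lane sends the car right. -/
def procAux : ℕ → ℕ → List Bool → ℕ × ℕ
  | R, L, [] => (R, L)
  | R, L, bi :: rest =>
    if bi = false ∨ R ≤ L then procAux (R + 1) L rest else procAux R (L + 1) rest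

/-- Final (right lane length, left lane length) of an arrival sequence. -/
def proc (b : List Bool) : ℕ × ℕ := procAux 0 0 b

/-- The final length of the right lane. -/
def rlen (b : List Bool) : ℕ := (proc b).1

/-- Number of bounces: steps where `bᵢ = 1` and the lanes are equal. -/
def bncAux : ℕ → ℕ → List Bool → ℕ
  | _, _, [] => 0
  | R, L, bi :: rest =>
    if bi = true ∧ R = L then 1 + bncAux (R + 1) L rest
    else if bi = false ∨ R ≤ L then bncAux (R + 1) L rest
    else bncAux R (L + 1) rest

def bnc (b : List Bool) : ℕ := bncAux 0 0 b

/-- The parity vector: starts at `0` and toggles just after each bounce. -/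
def pvAux : ℕ → ℕ → Bool → List Bool → List Bool
  | _, _, _, [] => []
  | R, L, p, bi :: rest =>
    let p' := if bi = true ∧ R = L then !p else p
    if bi = false ∨ R ≤ L then p :: pvAux (R + 1) L p' rest
    else p :: pvAux R (L + 1) p' rest

def parityVec (b : List Bool) : List Bool := pvAux 0 0 false b

/-- `φ(b) = b + p(b)` bitwise mod 2. -/
def phi (b : List Bool) : List Bool := List.zipWith xor b (parityVec b)

lemma procAux_sum : ∀ (rest : List Bool) (R L : ℕ),
    (procAux R L rest).1 + (procAux R L rest).2 = R + L + rest.length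
  | [], R, L => by simp [procAux]
  | bi :: rest, R, L => by
    simp only [procAux]
    split <;> rw [procAux_sum rest] <;> simp <;> omega

lemma procAux_fst : ∀ (rest : List Bool) (R L : ℕ), L ≤ R →
    (procAux R L rest).1 = R + rest.count false + bncAux R L rest
  | [], R, L, _ => by simp [procAux, bncAux]
  | bi :: rest, R, L, h => by
    simp only [procAux, bncAux]
    by_cases h1 : bi = false ∨ R ≤ L
    · by_cases h2 : bi = true ∧ R = L
      · simp only [if_pos h1, if_pos h2]
        rw [procAux_fst rest (R+1) L (by omega)]
        rcases h2 with ⟨hb, _⟩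
        simp [hb, List.count_cons]
        omega
      · simp only [if_pos h1, if_neg h2]
        rw [procAux_fst rest (R+1) L (by omega)]
        have hb : bi = false := by
          rcases h1 with h1 | h1
          · exact h1
          · by_contra hc
            exact h2 ⟨by simpa using hc, le_antisymm h1 h⟩
        simp [hb, List.count_cons]
        omega
    · have h2 : ¬ (bi = true ∧ R = L) := by
        rintro ⟨_, rfl⟩; exact h1 (Or.inr le_rfl)
      simp only [if_neg h1, if_neg h2]
      rw [procAux_fst rest R (L+1) (by omega)]
      have hb : bi = true := by
        cases bi
        · exact absurd (Or.inl rfl) h1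
        · rfl
      simp [hb, List.count_cons]

lemma procAux_snd_le : ∀ (rest : List Bool) (R L : ℕ), L ≤ R →
    (procAux R L rest).2 ≤ (procAux R L rest).1
  | [], R, L, h => by simpa [procAux]
  | bi :: rest, R, L, h => by
    simp only [procAux]
    split
    · exact procAux_snd_le rest (R+1) L (by omega)
    · next hn => exact procAux_snd_le rest R (L+1) (by omega)

lemma bncAux_le : ∀ (rest : List Bool) (R L : ℕ), L ≤ R →
    2 * bncAux R L rest ≤ rest.count true + (if R = L then 1 else 0)
  | [], R, L, _ => by simp [bncAux]
  | bi :: rest, R, L, h => by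
    simp only [bncAux]
    by_cases h2 : bi = true ∧ R = L
    · rw [if_pos h2]
      rcases h2 with ⟨hb, hRL⟩
      subst hRL
      have := bncAux_le rest (R+1) R (by omega)
      rw [if_neg (by omega)] at this
      simp [hb, List.count_cons]
      omega
    · rw [if_neg h2]
      by_cases h1 : bi = false ∨ R ≤ L
      · rw [if_pos h1]
        have := bncAux_le rest (R+1) L (by omega)
        rw [if_neg (by omega)] at this
        have hb : bi = false := by
          rcases h1 with h1 | h1
          · exact h1
          · by_contra hc
            exact h2 ⟨by simpa using hc, le_antisymm h1 h⟩
        simp [hb, List.count_cons]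
        split <;> omega
      · rw [if_neg h1]
        have := bncAux_le rest R (L+1) (by omega)
        have hb : bi = true := by
          cases bi
          · exact absurd (Or.inl rfl) h1
          · rfl
        have hR : R ≠ L := fun he => h1 (Or.inr he.le)
        rw [if_neg hR]
        simp [hb, List.count_cons]
        split at this <;> omega

lemma count_tf (b : List Bool) : b.count true + b.count false = b.length := by
  induction b with
  | nil => simp
  | cons x xs ih => cases x <;> simp [List.count_cons] <;> omega

theorem stmt_14 (ℓ k β : ℕ) (b : List Bool) (hlen : b.length = ℓ)
    (hk : b.count false = k) (hβ : bnc b = β) :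
    ℓ ≤ 2 * k + 2 * β ∧ 2 * β ≤ ℓ - k + 1 := by
  have hsum := procAux_sum b 0 0
  have hfst := procAux_fst b 0 0 (le_refl 0)
  have hle := procAux_snd_le b 0 0 (le_refl 0)
  have hbnc := bncAux_le b 0 0 (le_refl 0)
  have hct := count_tf b
  have hkl : k ≤ ℓ := by rw [← hlen, ← hk]; exact List.count_le_length
  simp only [if_pos rfl] at hbnc
  rw [hk, hlen] at *
  unfold bnc at hβ
  rw [hβ] at hfst hbnc
  simp only [if_pos trivial] at hbnc
  omega
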